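/- Let g_n denote the number of 132-avoiding revised ascent sequences of length n, and let s_n denote the number of 132-avoiding revised ascent sequences x of length n with x_{n−1} < max(x) and x_n = max(x). Then for all n ≥ 2, s_n = Σ_{k ≥ 1} g_{n−1−k} (with g_j = 0 for j ≤ 0). -/

import Mathlib

/-- An endofunction of size `n`: values in `{1,…,n}` (indices are `Fin n`, 0-based). -/
def IsEndo (n : ℕ) (x : Fin n → ℕ) : Prop := ∀ i, 1 ≤ x i ∧ x i ≤ n

/-- The maximum value of `x`. -/
def maxVal (n : ℕ) (x : Fin n → ℕ) : ℕ := Finset.univ.sup x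

/-- A Cayley permutation: an endofunction whose image is `{1,…,max x}`. -/
def IsCayley (n : ℕ) (x : Fin n → ℕ) : Prop :=
  IsEndo n x ∧ ∀ v, 1 ≤ v → v ≤ maxVal n x → ∃ i, x i = v

/-- Ascent bottoms (0-based; index 0 always included). -/
def Ascbot (n : ℕ) (x : Fin n → ℕ) : Set (Fin n) :=
  {i | i.1 = 0 ∨ ∃ h : i.1 + 1 < n, x i < x ⟨i.1 + 1, h⟩}

/-- Indices of leftmost occurrences of values. -/
def Nub (n : ℕ) (x : Fin n → ℕ) : Set (Fin n) :=
  {i | ∀ j, j < i → x j ≠ x i}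

/-- A revised ascent sequence. -/
def IsRAS (n : ℕ) (x : Fin n → ℕ) : Prop :=
  IsCayley n x ∧ Ascbot n x = Nub n x

/-- `x` avoids the pattern `132`. -/
def Avoids132 (n : ℕ) (x : Fin n → ℕ) : Prop :=
  ¬ ∃ i j k : Fin n, i < j ∧ j < k ∧ x i < x k ∧ x k < x j

/-- `g n` : the number of `132`-avoiding revised ascent sequences of length `n`,
with the convention `g 0 = 0`. -/
noncomputable def g : ℕ → ℕ
  | 0 => 0
  | n + 1 => {x : Fin (n + 1) → ℕ | IsRAS (n + 1) x ∧ Avoids132 (n + 1) x}.ncard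

/-- `s n` : the number of `132`-avoiding revised ascent sequences `x` of length `n`
with `x (n-1) < max x` and `x n = max x` (1-based indexing in the paper). -/
noncomputable def s (n : ℕ) : ℕ :=
  {x : Fin n → ℕ | IsRAS n x ∧ Avoids132 n x ∧
    ∃ h : 2 ≤ n,
      x ⟨n - 2, by omega⟩ < maxVal n x ∧ x ⟨n - 1, by omega⟩ = maxVal n x}.ncard

lemma le_maxVal {n : ℕ} (x : Fin n → ℕ) (i : Fin n) : x i ≤ maxVal n x :=
  Finset.le_sup (Finset.mem_univ i)

def RASet (m : ℕ) : Set (Fin m → ℕ) := {y | IsRAS m y ∧ Avoids132 m y}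
def Sset (n : ℕ) : Set (Fin n → ℕ) :=
  {x | IsRAS n x ∧ Avoids132 n x ∧
    ∃ h : 2 ≤ n,
      x ⟨n - 2, by omega⟩ < maxVal n x ∧ x ⟨n - 1, by omega⟩ = maxVal n x}
noncomputable def Phi (n m k : ℕ) (y : Fin m → ℕ) : Fin n → ℕ := fun j =>
  if h : (j : ℕ) < m then y ⟨j, h⟩ + k
  else if (j : ℕ) + 1 < n then (j : ℕ) - m + 1
  else maxVal m y + k

lemma g_eq (m : ℕ) (hm : 1 ≤ m) : g m = (RASet m).ncard := by
  match m, hm with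
  | (m+1), _ => rfl

lemma s_eq (n : ℕ) : s n = (Sset n).ncard := rfl

lemma finite_of_bounded {n : ℕ} (S : Set (Fin n → ℕ)) (h : ∀ x ∈ S, ∀ i, x i ≤ n) :
    S.Finite := by
  have : S ⊆ Set.pi Set.univ (fun _ : Fin n => Set.Iic n) := fun x hx i _ => h x hx i
  exact Set.Finite.subset (Set.Finite.pi (fun _ => Set.finite_Iic n)) this

lemma phi_inj (n m k : ℕ) (hmn : m < n) : Function.Injective (Phi n m k) := by
  intro y y' h
  funext j
  have := congrFun h ⟨j.1, by omega⟩
  simp only [Phi, dif_pos (show ((⟨j.1, by omega⟩ : Fin n) : ℕ) < m from j.2)] at this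
  simp only [Fin.val_mk, Fin.eta] at this
  omega

lemma Phi_at_n2 (n m k : ℕ) (hm : 1 ≤ m) (hk : 1 ≤ k) (hmk : m + k + 1 = n)
    (y : Fin m → ℕ) : Phi n m k y ⟨n - 2, by omega⟩ = k := by
  simp only [Phi]
  rw [dif_neg (show ¬ ((⟨n-2, by omega⟩ : Fin n) : ℕ) < m from by show ¬ (n - 2 < m); omega),
    if_pos (show ((⟨n-2, by omega⟩ : Fin n) : ℕ) + 1 < n from by show n - 2 + 1 < n; omega)]
  show n - 2 - m + 1 = k
  omega


section backward

lemma backward {n m k : ℕ} (hm : 1 ≤ m) (hk : 1 ≤ k) (hmk : m + k + 1 = n)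
  {y : Fin m → ℕ} (hy : IsRAS m y) (hav : Avoids132 m y) : Phi n m k y ∈ Sset n := by
  set μ := maxVal m y with hμdef
  set x := Phi n m k y with hxdef
  obtain ⟨⟨hendo, hcay⟩, hAN⟩ := hy
  have hnubY : ∀ i : Fin m, i ∈ Nub m y ↔ (i.1 = 0 ∨ ∃ h : i.1 + 1 < m, y i < y ⟨i.1+1, h⟩) := by
    intro i
    rw [← hAN]; rfl
  have hμ1 : 1 ≤ μ := le_trans (hendo ⟨0, hm⟩).1 (le_maxVal y ⟨0, hm⟩)
  have hμm : μ ≤ m := Finset.sup_le fun j _ => (hendo j).2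
  -- value lemmas
  have vpre : ∀ (j : Fin n) (h : j.1 < m), x j = y ⟨j.1, h⟩ + k := by
    intro j h; simp only [hxdef, Phi, dif_pos h]
  have vwin : ∀ (j : Fin n), m ≤ j.1 → j.1 + 1 < n → x j = j.1 - m + 1 := by
    intro j h1 h2
    simp only [hxdef, Phi, dif_neg (by omega : ¬ (j.1 < m)), if_pos h2]
  have vlast : ∀ (j : Fin n), j.1 = n - 1 → x j = μ + k := by
    intro j h
    simp only [hxdef, Phi, dif_neg (by omega : ¬ (j.1 < m)),
      if_neg (by omega : ¬ (j.1 + 1 < n)), hμdef]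
  -- Nub facts
  have nub_pre : ∀ (i : Fin n) (h : i.1 < m),
      (i ∈ Nub n x ↔ (⟨i.1, h⟩ : Fin m) ∈ Nub m y) := by
    intro i h
    simp only [Nub, Set.mem_setOf_eq]
    constructor
    · intro H j hj heq
      have hj' : (⟨j.1, by omega⟩ : Fin n) < i := by
        simp only [Fin.lt_def] at hj ⊢; exact hj
      apply H ⟨j.1, by omega⟩ hj'
      rw [vpre _ (by simpa using (by simp only [Fin.lt_def] at hj; omega : j.1 < m)),
        vpre i h]
      simp only [Fin.eta]
      omega
    · intro H j hj heq
      have hjm : j.1 < m := by simp only [Fin.lt_def] at hj; omega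
      rw [vpre j hjm, vpre i h] at heq
      exact H ⟨j.1, hjm⟩ (by simp only [Fin.lt_def] at hj ⊢; exact hj) (by omega)
  have nub_win : ∀ (i : Fin n), m ≤ i.1 → i.1 + 1 < n → i ∈ Nub n x := by
    intro i h1 h2 j hj heq
    have hival : x i = i.1 - m + 1 := vwin i h1 h2
    have hik : x i ≤ k := by omega
    by_cases hjm : j.1 < m
    · have := (hendo ⟨j.1, hjm⟩).1
      rw [vpre j hjm, hival] at heq
      omega
    · have hjlt : j.1 < i.1 := hj
      rw [vwin j (by omega) (by omega), hival] at heq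
      omega
  have nub_last : ∀ (i : Fin n), i.1 = n - 1 → i ∉ Nub n x := by
    intro i h H
    obtain ⟨p, hp⟩ := hcay μ hμ1 le_rfl
    have hpn : p.1 < n := by omega
    apply H ⟨p.1, hpn⟩ (by simp only [Fin.lt_def]; omega)
    rw [vpre ⟨p.1, hpn⟩ (by simpa using p.2), vlast i h]
    simp only [Fin.eta]
    omega
  -- monotonicity on the window+last
  have winmono : ∀ p q : Fin n, m ≤ p.1 → p.1 < q.1 → x p < x q := by
    intro p q h1 h2
    have hxp : x p = p.1 - m + 1 := vwin p h1 (by omega)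
    by_cases hq : q.1 + 1 < n
    · rw [hxp, vwin q (by omega) hq]; omega
    · rw [hxp, vlast q (by omega)]; omega
  -- Ascbot = Nub
  have hABN : Ascbot n x = Nub n x := by
    ext i
    simp only [Ascbot, Set.mem_setOf_eq]
    by_cases h0 : i.1 = 0
    · constructor
      · intro _
        intro j hj
        have : j.1 < i.1 := hj
        omega
      · intro _; left; exact h0
    by_cases hpre2 : i.1 + 1 < m
    · -- inside prefix, successor in prefix
      have him : i.1 < m := by omega
      have hasc : (i.1 = 0 ∨ ∃ h : i.1 + 1 < n, x i < x ⟨i.1 + 1, h⟩) ↔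
          y ⟨i.1, him⟩ < y ⟨i.1 + 1, hpre2⟩ := by
        constructor
        · rintro (h | ⟨h, hlt⟩); · omega
          rw [vpre i him, vpre ⟨i.1+1, h⟩ (by simpa using hpre2)] at hlt
          simpa using (by omega : y ⟨i.1, him⟩ + k < y ⟨(⟨i.1+1,h⟩ : Fin n).1, by simpa using hpre2⟩ + k)
        · intro hlt
          right
          refine ⟨by omega, ?_⟩
          rw [vpre i him, vpre ⟨i.1+1, by omega⟩ (by simpa using hpre2)]
          simpa using (by omega : y ⟨i.1, him⟩ + k < y ⟨i.1+1, hpre2⟩ + k)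
      rw [hasc, nub_pre i him, hnubY]
      constructor
      · intro h; right; exact ⟨hpre2, h⟩
      · rintro (h | ⟨h, hlt⟩); · simp at h; omega
        exact hlt
    by_cases hpre1 : i.1 < m
    · -- i.1 + 1 = m, both sides false
      have him : i.1 + 1 = m := by omega
      constructor
      · rintro (h | ⟨h, hlt⟩); · omega
        exfalso
        rw [vpre i hpre1, vwin ⟨i.1+1, h⟩ (by simpa using him.ge) (by simp; omega)] at hlt
        have := (hendo ⟨i.1, hpre1⟩).1
        simp at hlt
        omega
      · intro H
        exfalso
        rw [nub_pre i hpre1, hnubY] at H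
        rcases H with h | ⟨h, _⟩
        · simp at h; omega
        · simp at h; omega
    by_cases hlast : i.1 + 1 < n
    · -- window: both sides true
      constructor
      · intro _; exact nub_win i (by omega) hlast
      · intro _
        right
        exact ⟨hlast, winmono i ⟨i.1+1, hlast⟩ (by omega) (by simp)⟩
    · -- i = n-1, both false
      have hin : i.1 = n - 1 := by omega
      constructor
      · rintro (h | ⟨h, _⟩); · omega
        omega
      · intro H; exact (nub_last i hin H).elim
  -- Avoids132
  have hAvX : Avoids132 n x := by
    rintro ⟨a, b, c, hab, hbc, h1, h2⟩
    have hab' : a.1 < b.1 := hab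
    have hbc' : b.1 < c.1 := hbc
    by_cases hbm : b.1 < m
    · have ham : a.1 < m := by omega
      by_cases hcm : c.1 < m
      · apply hav
        refine ⟨⟨a.1, ham⟩, ⟨b.1, hbm⟩, ⟨c.1, hcm⟩, Fin.mk_lt_mk.mpr hab',
          Fin.mk_lt_mk.mpr hbc', ?_, ?_⟩
        · rw [vpre a ham, vpre c hcm] at h1; omega
        · rw [vpre b hbm, vpre c hcm] at h2; omega
      · by_cases hcl : c.1 + 1 < n
        · rw [vpre a ham, vwin c (by omega) hcl] at h1
          have := (hendo ⟨a.1, ham⟩).1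
          omega
        · rw [vpre b hbm, vlast c (by omega)] at h2
          have : y ⟨b.1, hbm⟩ ≤ μ := le_maxVal y _
          omega
    · exact absurd h2 (by have := winmono b c (by omega) hbc'; omega)
  -- maxVal
  have hmax : maxVal n x = μ + k := by
    apply le_antisymm
    · apply Finset.sup_le
      intro j _
      by_cases hjm : j.1 < m
      · rw [vpre j hjm]
        have : y ⟨j.1, hjm⟩ ≤ μ := le_maxVal y _
        omega
      · by_cases hjl : j.1 + 1 < n
        · rw [vwin j (by omega) hjl]; omega
        · rw [vlast j (by omega)]
    · have : x ⟨n-1, by omega⟩ = μ + k := vlast _ rfl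
      rw [← this]
      exact le_maxVal x _
  refine ⟨⟨⟨?_, ?_⟩, hABN⟩, hAvX, by omega, ?_, ?_⟩
  · -- endo
    intro j
    by_cases hjm : j.1 < m
    · rw [vpre j hjm]
      have := (hendo ⟨j.1, hjm⟩).2
      omega
    · by_cases hjl : j.1 + 1 < n
      · rw [vwin j (by omega) hjl]; omega
      · rw [vlast j (by omega)]; omega
  · -- cayley
    intro v hv1 hv2
    rw [hmax] at hv2
    by_cases hvk : v ≤ k
    · refine ⟨⟨m + (v - 1), by omega⟩, ?_⟩
      rw [vwin _ (show m ≤ m + (v - 1) by omega) (show m + (v - 1) + 1 < n by omega)]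
      show m + (v - 1) - m + 1 = v
      omega
    · obtain ⟨p, hp⟩ := hcay (v - k) (by omega) (by omega)
      refine ⟨⟨p.1, by omega⟩, ?_⟩
      rw [vpre _ (by simpa using p.2)]
      simp only [Fin.eta]
      omega
  · have h1 : x ⟨n - 2, by omega⟩ = n - 2 - m + 1 :=
      vwin ⟨n - 2, by omega⟩ (show m ≤ n - 2 by omega) (show n - 2 + 1 < n by omega)
    omega
  · exact (vlast ⟨n - 1, by omega⟩ rfl).trans hmax.symm

end backward


set_option maxHeartbeats 1000000 in
lemma forward {n : ℕ} {x : Fin n → ℕ} (hx : x ∈ Sset n) :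
    ∃ m k, 1 ≤ m ∧ 1 ≤ k ∧ m + k + 1 = n ∧ ∃ y ∈ RASet m, x = Phi n m k y := by
  obtain ⟨⟨⟨hendo, hcay⟩, hAN⟩, hav, hn, hlt, hmaxx⟩ := hx
  have hnub : ∀ i : Fin n, i ∈ Ascbot n x ↔ i ∈ Nub n x := Set.ext_iff.mp hAN
  set M := maxVal n x with hMdef
  set k := x ⟨n - 2, by omega⟩ with hkdef
  have hk1 : 1 ≤ k := (hendo _).1
  have hkM : k < M := hlt
  have hmaxx' : x ⟨n - 1, by omega⟩ = M := hmaxx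
  -- conversion helpers for Ascbot/Nub at ℕ-indices
  have nub_mp : ∀ (jv : ℕ) (hj : jv < n),
      (jv = 0 ∨ ∃ h : jv + 1 < n, x ⟨jv, hj⟩ < x ⟨jv + 1, h⟩) →
      ∀ i, i < jv → ∀ hi : i < n, x ⟨i, hi⟩ ≠ x ⟨jv, hj⟩ := by
    intro jv hj h i hilt hin
    exact (hnub ⟨jv, hj⟩).mp h ⟨i, hin⟩ hilt
  have nub_mpr : ∀ (jv : ℕ) (hj : jv < n),
      (∀ i, i < jv → ∀ hi : i < n, x ⟨i, hi⟩ ≠ x ⟨jv, hj⟩) →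
      (jv = 0 ∨ ∃ h : jv + 1 < n, x ⟨jv, hj⟩ < x ⟨jv + 1, h⟩) := by
    intro jv hj h
    exact (hnub ⟨jv, hj⟩).mpr (fun j' hj' => h j'.1 hj' j'.2)
  -- the last entry is a repeat; get the first occurrence of M
  have hrep : ∃ i, ∃ h : i < n, x ⟨i, h⟩ = M := by
    have h2 : ¬ ∀ j, j < (⟨n-1, by omega⟩ : Fin n) → x j ≠ x ⟨n-1, by omega⟩ := by
      intro H
      have := (hnub ⟨n-1, by omega⟩).mpr H
      rcases this with h0 | ⟨h', _⟩
      · have : n - 1 = 0 := h0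
        omega
      · have : n - 1 + 1 < n := h'
        omega
    push_neg at h2
    obtain ⟨j, hjlt, hjeq⟩ := h2
    exact ⟨j.1, j.2, by rw [hjeq]; exact hmaxx'⟩
  have hI : ∃ i0, i0 < n - 2 ∧ (∀ h : i0 < n, x ⟨i0, h⟩ = M) ∧
      (∀ j, j < i0 → ∀ h : j < n, x ⟨j, h⟩ ≠ M) := by
    refine ⟨Nat.find hrep, ?_, ?_, ?_⟩
    · obtain ⟨hfn, hfx⟩ := Nat.find_spec hrep
      -- find ≤ the repeat witness  < n-1
      have h2 : ¬ ∀ j, j < (⟨n-1, by omega⟩ : Fin n) → x j ≠ x ⟨n-1, by omega⟩ := by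
        intro H
        have := (hnub ⟨n-1, by omega⟩).mpr H
        rcases this with h0 | ⟨h', _⟩
        · have : n - 1 = 0 := h0
          omega
        · have : n - 1 + 1 < n := h'
          omega
      push_neg at h2
      obtain ⟨j, hjlt, hjeq⟩ := h2
      have hle : Nat.find hrep ≤ j.1 := Nat.find_min' hrep ⟨j.2, by rw [hjeq]; exact hmaxx'⟩
      have hjn1 : j.1 < n - 1 := hjlt
      -- find ≠ n - 2
      have hne : Nat.find hrep ≠ n - 2 := by
        intro he
        have heq : (⟨Nat.find hrep, hfn⟩ : Fin n) = ⟨n-2, by omega⟩ :=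
          Fin.ext (show Nat.find hrep = n - 2 from he)
        rw [heq] at hfx
        omega
      omega
    · intro h
      obtain ⟨hfn, hfx⟩ := Nat.find_spec hrep
      exact hfx
    · intro j hj h hx
      exact Nat.find_min hrep hj ⟨h, hx⟩
  obtain ⟨i0, hi0lt, hi0x, hi0min⟩ := hI
  -- index n-2 is a leftmost occurrence
  have hnew2 : ∀ i, i < n - 2 → ∀ hi : i < n, x ⟨i, hi⟩ ≠ k := by
    have hasc : (n - 2 = 0 ∨ ∃ h : n - 2 + 1 < n, x ⟨n-2, by omega⟩ < x ⟨n - 2 + 1, h⟩) := by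
      by_cases h2 : n = 2
      · left; omega
      · right
        refine ⟨by omega, ?_⟩
        have e : (⟨n - 2 + 1, by omega⟩ : Fin n) = ⟨n - 1, by omega⟩ :=
          Fin.ext (show n - 2 + 1 = n - 1 by omega)
        rw [e, hmaxx']
        omega
    have h := nub_mp (n-2) (by omega) hasc
    intro i hilt hi heq
    exact h i hilt hi (by omega)
  -- after a value < k, everything before n-2 is < k
  have hsmall : ∀ p q : ℕ, ∀ (hp : p < n) (hq : q < n), x ⟨p, hp⟩ < k → p < q → q < n - 2 →
      x ⟨q, hq⟩ < k := by
    intro p q hp hq hxp hpq hq2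
    rcases Nat.lt_or_ge (x ⟨q, hq⟩) k with h | h
    · exact h
    have hne := hnew2 q hq2 hq
    have hgt : k < x ⟨q, hq⟩ := by omega
    exfalso
    apply hav
    refine ⟨⟨p, hp⟩, ⟨q, hq⟩, ⟨n-2, by omega⟩, Fin.mk_lt_mk.mpr hpq,
      Fin.mk_lt_mk.mpr (by omega), by omega, by omega⟩
  -- m : first index with value ≤ k
  have hQ : ∃ j, ∃ h : j < n, x ⟨j, h⟩ ≤ k := ⟨n - 2, by omega, by omega⟩
  have hmex : ∃ m, m ≤ n - 2 ∧ (∀ h : m < n, x ⟨m, h⟩ ≤ k) ∧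
      (∀ j, j < m → ∀ h : j < n, k < x ⟨j, h⟩) := by
    refine ⟨Nat.find hQ, Nat.find_min' hQ ⟨by omega, by omega⟩, ?_, ?_⟩
    · intro h
      obtain ⟨h1, h2⟩ := Nat.find_spec hQ
      exact h2
    · intro j hj h
      have := Nat.find_min hQ hj
      push_neg at this
      exact this h
  obtain ⟨m, hm2, hmle, hmmin⟩ := hmex
  -- window values are < k strictly before n-2
  have winlt : ∀ q, m ≤ q → q < n - 2 → ∀ hq : q < n, x ⟨q, hq⟩ < k := by
    intro q h1 h2 hq
    rcases Nat.eq_or_lt_of_le h1 with h | h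
    · subst h
      have ha := hmle hq
      have hb := hnew2 _ h2 hq
      omega
    · have hmk' : x ⟨m, by omega⟩ < k := by
        have := hmle (by omega)
        have := hnew2 m (by omega) (by omega)
        omega
      exact hsmall m q (by omega) hq hmk' h h2
  -- i0 < m, hence 1 ≤ m
  have hi0m : i0 < m := by
    by_contra h
    push_neg at h
    rcases Nat.eq_or_lt_of_le h with h' | h'
    · subst h'
      have h1 := hmle (by omega)
      have h2 := hi0x (by omega)
      omega
    · have := winlt i0 (by omega) hi0lt (by omega)
      have := hi0x (by omega)
      omega
  have hm1 : 1 ≤ m := by omega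
  -- all window indices are leftmost occurrences
  have nubw : ∀ j, m ≤ j → j ≤ n - 2 → ∀ hj : j < n, ∀ i, i < j → ∀ hi : i < n,
      x ⟨i, hi⟩ ≠ x ⟨j, hj⟩ := by
    intro j
    induction j using Nat.strong_induction_on with
    | _ j IH =>
    intro hmj hj2 hjn
    have chain : ∀ i, m ≤ i → i + 1 ≤ j → ∀ hi1 : i + 1 < n,
        x ⟨i, by omega⟩ < x ⟨i + 1, hi1⟩ := by
      intro i h1 h2 hi1
      have hnubi := IH i (by omega) h1 (by omega) (by omega)
      have hasc := nub_mpr i (by omega) hnubi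
      rcases hasc with h0 | ⟨h', hlt'⟩
      · omega
      · exact hlt'
    have mono : ∀ i', i' ≤ j → ∀ i, m ≤ i → i < i' → ∀ (hi : i < n) (hi' : i' < n),
        x ⟨i, hi⟩ < x ⟨i', hi'⟩ := by
      intro i'
      induction i' with
      | zero => omega
      | succ a IH2 =>
        intro ha i h1 h2 hi hi'
        rcases Nat.lt_or_ge i a with h | h
        · exact lt_trans (IH2 (by omega) i h1 h hi (by omega)) (chain a (by omega) (by omega) hi')
        · have he : i = a := by omega
          subst he
          exact chain i h1 (by omega) hi'
    intro i hij hi heq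
    have hxj : x ⟨j, hjn⟩ ≤ k := by
      rcases Nat.lt_or_ge j (n - 2) with h | h
      · exact le_of_lt (winlt j hmj h hjn)
      · have he : j = n - 2 := by omega
        subst he
        omega
    have him : m ≤ i := by
      by_contra h
      push_neg at h
      have := hmmin i h hi
      omega
    have := mono j le_rfl i him hij hi hjn
    omega
  -- global ascent chain / monotonicity on the window
  have gchain : ∀ i, m ≤ i → i + 1 ≤ n - 2 → ∀ hi1 : i + 1 < n,
      x ⟨i, by omega⟩ < x ⟨i + 1, hi1⟩ := by
    intro i h1 h2 hi1
    have hnubi := nubw i h1 (by omega) (by omega)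
    have hasc := nub_mpr i (by omega) hnubi
    rcases hasc with h0 | ⟨h', hlt'⟩
    · omega
    · exact hlt'
  have gmono : ∀ i i', m ≤ i → i < i' → i' ≤ n - 2 → ∀ (hi : i < n) (hi' : i' < n),
      x ⟨i, hi⟩ < x ⟨i', hi'⟩ := by
    intro i i' h1 h2 h3
    induction i' with
    | zero => omega
    | succ a IH2 =>
      intro hi hi'
      rcases Nat.lt_or_ge i a with h | h
      · exact lt_trans (IH2 h (by omega) hi (by omega)) (gchain a (by omega) (by omega) hi')
      · have he : i = a := by omega
        subst he
        exact gchain i h1 (by omega) hi'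
  -- the window is 1, 2, ..., k
  have vals : ∀ t, t < k → m + t ≤ n - 2 ∧ ∀ h : m + t < n, x ⟨m + t, h⟩ = t + 1 := by
    intro t
    induction t with
    | zero =>
      intro _
      refine ⟨by omega, ?_⟩
      intro h
      obtain ⟨p, hp⟩ := hcay 1 le_rfl (by omega)
      have hpx : x ⟨p.1, p.2⟩ = 1 := hp
      have hpm : m ≤ p.1 := by
        by_contra h'
        push_neg at h'
        have := hmmin p.1 h' p.2
        omega
      have hpn2 : p.1 ≤ n - 2 := by
        by_contra h'
        push_neg at h'
        have he : (⟨p.1, p.2⟩ : Fin n) = ⟨n - 1, by omega⟩ :=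
          Fin.ext (show p.1 = n - 1 by omega)
        rw [he] at hpx
        omega
      rcases Nat.eq_or_lt_of_le hpm with h' | h'
      · have he : (⟨p.1, p.2⟩ : Fin n) = ⟨m + 0, h⟩ :=
          Fin.ext (show p.1 = m + 0 by omega)
        rw [he] at hpx
        omega
      · exfalso
        have := gmono m p.1 le_rfl h' hpn2 (by omega) p.2
        have := (hendo ⟨m, by omega⟩).1
        omega
    | succ t IHt =>
      intro htk
      obtain ⟨h1, h2⟩ := IHt (by omega)
      have hmt : m + t < n := by omega
      have hxt := h2 hmt
      have hne : m + t ≠ n - 2 := by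
        intro h'
        have he : (⟨m + t, hmt⟩ : Fin n) = ⟨n - 2, by omega⟩ :=
          Fin.ext (show m + t = n - 2 from h')
        rw [he] at hxt
        omega
      have hstep : m + (t + 1) ≤ n - 2 := by omega
      refine ⟨hstep, ?_⟩
      intro h
      obtain ⟨p, hp⟩ := hcay (t + 2) (by omega) (by omega)
      have hpx : x ⟨p.1, p.2⟩ = t + 2 := hp
      have hpm : m ≤ p.1 := by
        by_contra h'
        push_neg at h'
        have := hmmin p.1 h' p.2
        omega
      have hpn2 : p.1 ≤ n - 2 := by
        by_contra h'
        push_neg at h'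
        have he : (⟨p.1, p.2⟩ : Fin n) = ⟨n - 1, by omega⟩ :=
          Fin.ext (show p.1 = n - 1 by omega)
        rw [he] at hpx
        omega
      rcases Nat.lt_trichotomy p.1 (m + (t+1)) with h' | h' | h'
      · exfalso
        rcases Nat.lt_or_ge p.1 (m + t) with h'' | h''
        · have := gmono p.1 (m + t) hpm h'' (by omega) p.2 hmt
          omega
        · have he : (⟨p.1, p.2⟩ : Fin n) = ⟨m + t, hmt⟩ :=
            Fin.ext (show p.1 = m + t by omega)
          rw [he] at hpx
          omega
      · have he : (⟨p.1, p.2⟩ : Fin n) = ⟨m + (t+1), h⟩ :=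
          Fin.ext (show p.1 = m + (t+1) from h')
        rw [he] at hpx
        omega
      · exfalso
        have ha := gmono (m + t) (m + (t+1)) (by omega) (by omega) (by omega) hmt h
        have hb := gmono (m + (t+1)) p.1 (by omega) h' hpn2 h p.2
        omega
  have hmk : m + k = n - 1 := by
    have hv := vals (k - 1) (by omega)
    obtain ⟨hle, hval⟩ := hv
    have hval' := hval (by omega)
    by_contra h
    have hlt2 : m + (k - 1) < n - 2 := by omega
    have := gmono (m + (k-1)) (n - 2) (by omega) hlt2 le_rfl (by omega) (by omega)
    omega
  have hn3 : m + k + 1 = n := by omega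
  have hmn : m < n := by omega
  -- occurrences of values above k are in the prefix
  have hocc : ∀ v, k + 1 ≤ v → v ≤ M → ∃ p, ∃ hp : p < m, x ⟨p, by omega⟩ = v := by
    intro v hv1 hv2
    by_cases hvM : v = M
    · exact ⟨i0, hi0m, by rw [hi0x (by omega)]; omega⟩
    · obtain ⟨p, hp⟩ := hcay v (by omega) hv2
      have hpx : x ⟨p.1, p.2⟩ = v := hp
      have hp2 : p.1 < m := by
        by_contra h
        push_neg at h
        rcases Nat.lt_or_ge p.1 (n - 2) with h' | h'
        · have := winlt p.1 h h' p.2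
          omega
        · by_cases h'' : p.1 = n - 2
          · have he : (⟨p.1, p.2⟩ : Fin n) = ⟨n - 2, by omega⟩ :=
              Fin.ext (show p.1 = n - 2 from h'')
            rw [he] at hpx
            omega
          · have he : (⟨p.1, p.2⟩ : Fin n) = ⟨n - 1, by omega⟩ :=
              Fin.ext (show p.1 = n - 1 by omega)
            rw [he] at hpx
            omega
      exact ⟨p.1, hp2, hpx⟩
  -- pigeonhole: M - k ≤ m
  have hMk : M - k ≤ m := by
    have hocc' : ∀ v : Fin (M - k), ∃ p : Fin m, x ⟨p.1, by omega⟩ = k + 1 + v.1 := by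
      intro v
      obtain ⟨p, hp, hxval⟩ := hocc (k + 1 + v.1) (by omega) (by omega)
      exact ⟨⟨p, hp⟩, hxval⟩
    choose F hF using hocc'
    have hFinj : Function.Injective F := by
      intro a b hab
      have h1 := hF a
      have h2 := hF b
      rw [hab] at h1
      exact Fin.ext (by omega)
    have := Fintype.card_le_of_injective F hFinj
    simpa using this
  -- define y
  set y : Fin m → ℕ := fun j => x ⟨j.1, by omega⟩ - k with hydef
  have hyval : ∀ j : Fin m, x ⟨j.1, by omega⟩ = y j + k := by
    intro j
    have h1 : k < x ⟨j.1, by omega⟩ := hmmin j.1 j.2 (by omega)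
    have h2 : y j = x ⟨j.1, by omega⟩ - k := rfl
    omega
  have hyM : maxVal m y = M - k := by
    apply le_antisymm
    · apply Finset.sup_le
      intro j _
      have h1 := le_maxVal x ⟨j.1, by omega⟩
      have h2 := hyval j
      omega
    · have h1 : x ⟨i0, by omega⟩ = M := hi0x (by omega)
      have h2 := hyval ⟨i0, hi0m⟩
      have h3 := le_maxVal y ⟨i0, hi0m⟩
      simp only [Fin.val_mk] at h2
      omega
  have hyRAS : y ∈ RASet m := by
    refine ⟨⟨⟨?_, ?_⟩, ?_⟩, ?_⟩
    · -- endo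
      intro j
      have h1 := hmmin j.1 j.2 (by omega)
      have h2 := hyval j
      have h3 := le_maxVal x ⟨j.1, by omega⟩
      constructor <;> omega
    · -- cayley
      intro v hv1 hv2
      rw [hyM] at hv2
      obtain ⟨p, hp, hxv⟩ := hocc (v + k) (by omega) (by omega)
      refine ⟨⟨p, hp⟩, ?_⟩
      have hyp := hyval ⟨p, hp⟩
      simp only [Fin.val_mk] at hyp
      omega
    · -- Ascbot = Nub
      ext i
      simp only [Ascbot, Nub, Set.mem_setOf_eq]
      constructor
      · rintro (h0 | ⟨h', hlt'⟩)
        · intro j hj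
          have : j.1 < i.1 := hj
          omega
        · intro j hj heq
          have hxasc : x ⟨i.1, by omega⟩ < x ⟨i.1 + 1, by omega⟩ := by
            have ha := hyval i
            have hb := hyval ⟨i.1 + 1, h'⟩
            simp only [Fin.val_mk] at hb
            omega
          have hnubx := nub_mp i.1 (by omega) (Or.inr ⟨by omega, hxasc⟩)
          apply hnubx j.1 hj (by omega)
          have ha := hyval j
          have hb := hyval i
          omega
      · intro H
        have hnubx : ∀ i', i' < i.1 → ∀ hi' : i' < n, x ⟨i', hi'⟩ ≠ x ⟨i.1, by omega⟩ := by
          intro i' hilt hi' heq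
          have hi'm : i' < m := by omega
          apply H ⟨i', hi'm⟩ (Fin.mk_lt_mk.mpr hilt)
          have ha := hyval ⟨i', hi'm⟩
          have hb := hyval i
          simp only [Fin.val_mk] at ha
          omega
        have hasc := nub_mpr i.1 (by omega) hnubx
        rcases hasc with h0 | ⟨h', hlt'⟩
        · left; exact h0
        · by_cases him : i.1 + 1 < m
          · right
            refine ⟨him, ?_⟩
            have ha := hyval i
            have hb := hyval ⟨i.1 + 1, him⟩
            simp only [Fin.val_mk] at hb
            omega
          · exfalso
            -- i.1 + 1 = m, but x m = 1 ≤ k < x i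
            have he : (⟨i.1 + 1, h'⟩ : Fin n) = ⟨m + 0, by omega⟩ :=
              Fin.ext (show i.1 + 1 = m + 0 by omega)
            rw [he] at hlt'
            have h1 := (vals 0 (by omega)).2 (by omega)
            have h2 := hmmin i.1 i.2 (by omega)
            omega
    · -- Avoids132
      rintro ⟨a, b, c, hab, hbc, h1, h2⟩
      apply hav
      have ha := hyval a
      have hb := hyval b
      have hc := hyval c
      refine ⟨⟨a.1, by omega⟩, ⟨b.1, by omega⟩, ⟨c.1, by omega⟩,
        Fin.mk_lt_mk.mpr hab, Fin.mk_lt_mk.mpr hbc, by omega, by omega⟩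
  refine ⟨m, k, hm1, hk1, hn3, y, hyRAS, ?_⟩
  funext j
  simp only [Phi]
  by_cases hjm : j.1 < m
  · rw [dif_pos hjm]
    have hv := hyval ⟨j.1, hjm⟩
    simp only [Fin.val_mk] at hv
    exact hv
  · rw [dif_neg hjm]
    by_cases hjl : j.1 + 1 < n
    · rw [if_pos hjl]
      have ht : j.1 - m < k := by omega
      have hv := (vals (j.1 - m) ht).2 (by omega)
      have he : (⟨m + (j.1 - m), by omega⟩ : Fin n) = j :=
        Fin.ext (show m + (j.1 - m) = j.1 by omega)
      rw [he] at hv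
      omega
    · rw [if_neg hjl]
      have he : j = ⟨n - 1, by omega⟩ := Fin.ext (show j.1 = n - 1 by omega)
      rw [he, hmaxx', hyM]
      omega


theorem stmt19 (n : ℕ) (hn : 2 ≤ n) :
    s n = ∑ k ∈ Finset.Icc 1 n, g (n - 1 - k) := by
  classical
  have hfin : (Sset n).Finite :=
    finite_of_bounded _ (fun x hx i => (hx.1.1.1 i).2)
  have hcard : s n = hfin.toFinset.card := by
    rw [s_eq, Set.ncard_eq_toFinset_card _ hfin]
  rw [hcard]
  rw [Finset.card_eq_sum_card_fiberwise
    (f := fun x : Fin n → ℕ => x ⟨n - 2, by omega⟩) (t := Finset.Icc 1 n)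
    (fun x hx => by
      rw [Finset.mem_coe, Set.Finite.mem_toFinset] at hx
      have h1 := (hx.1.1.1 ⟨n - 2, by omega⟩).1
      have h2 := (hx.1.1.1 ⟨n - 2, by omega⟩).2
      exact Finset.mem_Icc.mpr ⟨h1, h2⟩)]
  apply Finset.sum_congr rfl
  intro k hk
  have hk1 : 1 ≤ k := (Finset.mem_Icc.mp hk).1
  -- the fiber as a set
  have hfiber : ((hfin.toFinset.filter (fun x => x ⟨n - 2, by omega⟩ = k)) : Set (Fin n → ℕ))
      = {x | x ∈ Sset n ∧ x ⟨n - 2, by omega⟩ = k} := by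
    ext z
    simp [Set.Finite.mem_toFinset]
  have hcount : (hfin.toFinset.filter (fun x => x ⟨n - 2, by omega⟩ = k)).card
      = ({x | x ∈ Sset n ∧ x ⟨n - 2, by omega⟩ = k} : Set (Fin n → ℕ)).ncard := by
    rw [← hfiber, Set.ncard_coe_finset]
  rw [hcount]
  clear hcount hfiber
  by_cases hkn : k ≤ n - 2
  · -- nonempty fibers
    have hm1 : 1 ≤ n - 1 - k := by omega
    have hmk : (n - 1 - k) + k + 1 = n := by omega
    have himg : {x | x ∈ Sset n ∧ x ⟨n - 2, by omega⟩ = k}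
        = Phi n (n - 1 - k) k '' RASet (n - 1 - k) := by
      ext z
      constructor
      · rintro ⟨hz, hzk⟩
        obtain ⟨m, k', hm', hk', hmk', y, hy, hzy⟩ := forward hz
        subst hzy
        have hzk' : Phi n m k' y ⟨n - 2, by omega⟩ = k' := Phi_at_n2 n m k' hm' hk' hmk' y
        have hkk : k' = k := by omega
        subst hkk
        have hmeq : m = n - 1 - k' := by omega
        subst hmeq
        exact ⟨y, hy, rfl⟩
      · rintro ⟨y, hy, hzy⟩
        constructor
        · rw [← hzy]; exact backward hm1 hk1 hmk hy.1 hy.2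
        · rw [← hzy]; exact Phi_at_n2 n (n - 1 - k) k hm1 hk1 hmk y
    rw [himg, Set.ncard_image_of_injective _ (phi_inj n (n - 1 - k) k (by omega)),
      ← g_eq _ hm1]
  · -- empty fibers
    have hempty : {x | x ∈ Sset n ∧ x ⟨n - 2, by omega⟩ = k} = (∅ : Set (Fin n → ℕ)) := by
      ext z
      simp only [Set.mem_setOf_eq, Set.mem_empty_iff_false, iff_false]
      rintro ⟨hz, hzk⟩
      obtain ⟨m, k', hm', hk', hmk', y, hy, hzy⟩ := forward hz
      subst hzy
      have hzk' : Phi n m k' y ⟨n - 2, by omega⟩ = k' := Phi_at_n2 n m k' hm' hk' hmk' y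
      omega
    rw [hempty, Set.ncard_empty]
    have : n - 1 - k = 0 := by omega
    rw [this]
    rfl
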